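/- arXiv:0804.4427 — 5 statements merged into one kernel-verified Lean document; each statement's English description precedes it below -/
import Mathlib

section
/- Two functions f, g ∈ L^1(μ) have μ-essentially disjoint supports if and only if ‖f + g‖₁ + ‖f - g‖₁ = 2(‖f‖₁ + ‖g‖₁). -/
open MeasureTheory

lemma abs_add_abs_sub_eq_two_max (a b : ℝ) :
    |a + b| + |a - b| = 2 * max |a| |b| := by
  rcases abs_cases (a + b) with ⟨h1, h1'⟩ | ⟨h1, h1'⟩ <;>
  rcases abs_cases (a - b) with ⟨h2, h2'⟩ | ⟨h2, h2'⟩ <;>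
  rcases max_cases |a| |b| with ⟨h3, h3'⟩ | ⟨h3, h3'⟩ <;>
  rcases abs_cases a with ⟨h4, h4'⟩ | ⟨h4, h4'⟩ <;>
  rcases abs_cases b with ⟨h5, h5'⟩ | ⟨h5, h5'⟩ <;>
  linarith

lemma abs_eq_iff_zero (a b : ℝ) :
    |a + b| + |a - b| = 2 * (|a| + |b|) ↔ a = 0 ∨ b = 0 := by
  rw [abs_add_abs_sub_eq_two_max]
  constructor
  · intro h
    rcases max_cases |a| |b| with ⟨he, _⟩ | ⟨he, _⟩ <;> rw [he] at h
    · right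
      exact abs_eq_zero.mp (by linarith)
    · left
      exact abs_eq_zero.mp (by linarith)
  · rintro (rfl | rfl)
    · simp [max_eq_right (abs_nonneg b)]
    · simp [max_eq_left (abs_nonneg a)]

/-- `f, g ∈ L^1(μ)` have `μ`-essentially disjoint supports iff
`‖f + g‖₁ + ‖f - g‖₁ = 2(‖f‖₁ + ‖g‖₁)`. -/
theorem stmt2 {Ω : Type*} [MeasurableSpace Ω] (μ : Measure Ω)
    (f g : Ω → ℝ) (hf : Integrable f μ) (hg : Integrable g μ) :
    μ (Function.support f ∩ Function.support g) = 0 ↔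
      (∫ x, |f x + g x| ∂μ) + (∫ x, |f x - g x| ∂μ)
        = 2 * ((∫ x, |f x| ∂μ) + (∫ x, |g x| ∂μ)) := by
  set F : Ω → ℝ := fun x => 2 * (|f x| + |g x|) - (|f x + g x| + |f x - g x|) with hF
  have hnonneg : ∀ x, 0 ≤ F x := by
    intro x
    have := abs_add_abs_sub_eq_two_max (f x) (g x)
    have h1 : max |f x| |g x| ≤ |f x| + |g x| :=
      max_le (le_add_of_nonneg_right (abs_nonneg _)) (le_add_of_nonneg_left (abs_nonneg _))
    simp only [hF]
    linarith
  have hint1 : Integrable (fun x => 2 * (|f x| + |g x|)) μ :=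
    (hf.abs.add hg.abs).const_mul 2
  have ha : Integrable (fun x => |f x + g x|) μ := (hf.add hg).abs
  have hb : Integrable (fun x => |f x - g x|) μ := (hf.sub hg).abs
  have hc : Integrable (fun x => |f x|) μ := hf.abs
  have hd : Integrable (fun x => |g x|) μ := hg.abs
  have hint2 : Integrable (fun x => |f x + g x| + |f x - g x|) μ := ha.add hb
  have hFint : Integrable F μ := hint1.sub hint2
  have hintval : ∫ x, F x ∂μ =
      2 * ((∫ x, |f x| ∂μ) + (∫ x, |g x| ∂μ))
        - ((∫ x, |f x + g x| ∂μ) + (∫ x, |f x - g x| ∂μ)) := by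
    rw [hF, integral_sub hint1 hint2, integral_add ha hb,
      MeasureTheory.integral_const_mul, integral_add hc hd]
  have hzero : (∫ x, F x ∂μ) = 0 ↔ F =ᵐ[μ] 0 :=
    integral_eq_zero_iff_of_nonneg hnonneg hFint
  have hsupp : {x | ¬ F x = 0} = Function.support f ∩ Function.support g := by
    ext x
    simp only [Set.mem_setOf_eq, Set.mem_inter_iff, Function.mem_support]
    have : F x = 0 ↔ (f x = 0 ∨ g x = 0) := by
      rw [← abs_eq_iff_zero]
      simp only [hF]
      constructor <;> intro h <;> linarith
    rw [this]
    tauto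
  constructor
  · intro h
    have hae : F =ᵐ[μ] 0 := by
      rw [Filter.EventuallyEq, ae_iff]
      simpa [hsupp] using h
    have := hzero.mpr hae
    rw [hintval] at this
    linarith
  · intro h
    have : (∫ x, F x ∂μ) = 0 := by rw [hintval]; linarith
    have hae := hzero.mp this
    rw [Filter.EventuallyEq, ae_iff] at hae
    simpa [hsupp] using hae
end

section
/- Every linear isometry ψ : L^1(ν) → L^1(υ) between L^1 spaces of positive measures preserves disjointness: if f, g ∈ L^1(ν) have ν-essentially disjoint supports, then ψ(f) and ψ(g) have υ-essentially disjoint supports. -/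
open MeasureTheory

private lemma real_key (a b : ℝ) (h : |a + b| + |a - b| = 2 * (|a| + |b|)) :
    a = 0 ∨ b = 0 := by
  by_contra hc
  push_neg at hc
  obtain ⟨ha, hb⟩ := hc
  have h1 : |a + b| ≤ |a| + |b| := abs_add_le a b
  have h2 : |a - b| ≤ |a| + |b| := abs_sub a b
  have e1 : |a + b| = |a| + |b| := by linarith
  have e2 : |a - b| = |a| + |b| := by linarith
  have q1 : (a + b) ^ 2 = (|a| + |b|) ^ 2 := by rw [← sq_abs (a + b), e1]
  have q2 : (a - b) ^ 2 = (|a| + |b|) ^ 2 := by rw [← sq_abs (a - b), e2]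
  have p1 : a * b = |a| * |b| := by nlinarith [sq_abs a, sq_abs b]
  have p2 : a * b = -(|a| * |b|) := by nlinarith [sq_abs a, sq_abs b]
  have := mul_pos (abs_pos.mpr ha) (abs_pos.mpr hb)
  linarith

private lemma norm_add_sub_of_disjoint {Ω : Type*} [MeasurableSpace Ω] {μ : Measure Ω}
    (f g : Lp ℝ 1 μ) (h : μ {x | f x ≠ 0 ∧ g x ≠ 0} = 0) :
    ‖f + g‖ + ‖f - g‖ = 2 * ‖f‖ + 2 * ‖g‖ := by
  have hf : Integrable f μ := L1.integrable_coeFn f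
  have hg : Integrable g μ := L1.integrable_coeFn g
  have hae : ∀ᵐ x ∂μ, f x = 0 ∨ g x = 0 := by
    have : ∀ᵐ x ∂μ, ¬(f x ≠ 0 ∧ g x ≠ 0) := by rw [ae_iff]; simpa using h
    filter_upwards [this] with x hx
    tauto
  have hadd : ‖f + g‖ = ∫ x, (‖f x‖ + ‖g x‖) ∂μ := by
    rw [L1.norm_eq_integral_norm]
    refine integral_congr_ae ?_
    filter_upwards [Lp.coeFn_add f g, hae] with x hx hx0
    rw [hx]
    rcases hx0 with h0 | h0 <;> simp [h0, Pi.add_apply]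
  have hsub : ‖f - g‖ = ∫ x, (‖f x‖ + ‖g x‖) ∂μ := by
    rw [L1.norm_eq_integral_norm]
    refine integral_congr_ae ?_
    filter_upwards [Lp.coeFn_sub f g, hae] with x hx hx0
    rw [hx]
    rcases hx0 with h0 | h0 <;> simp [h0, Pi.sub_apply]
  rw [hadd, hsub, integral_add hf.norm hg.norm, L1.norm_eq_integral_norm f,
    L1.norm_eq_integral_norm g]
  ring

private lemma disjoint_of_norm {Ω : Type*} [MeasurableSpace Ω] {μ : Measure Ω}
    (f g : Lp ℝ 1 μ) (h : ‖f + g‖ + ‖f - g‖ = 2 * ‖f‖ + 2 * ‖g‖) :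
    μ {x | f x ≠ 0 ∧ g x ≠ 0} = 0 := by
  have hf : Integrable f μ := L1.integrable_coeFn f
  have hg : Integrable g μ := L1.integrable_coeFn g
  set φ : Ω → ℝ := fun x => 2 * (‖f x‖ + ‖g x‖) - (‖f x + g x‖ + ‖f x - g x‖) with hφ
  have hφ0 : 0 ≤ᵐ[μ] φ := by
    filter_upwards with x
    have h1 : ‖f x + g x‖ ≤ ‖f x‖ + ‖g x‖ := norm_add_le _ _
    have h2 : ‖f x - g x‖ ≤ ‖f x‖ + ‖g x‖ := norm_sub_le _ _
    simp only [hφ, Pi.zero_apply]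
    linarith
  have hint : Integrable φ μ :=
    (((hf.norm.add hg.norm).const_mul 2).sub (((hf.add hg).norm).add ((hf.sub hg).norm)))
  have hI1 : ∫ x, ‖f x + g x‖ ∂μ = ‖f + g‖ := by
    rw [L1.norm_eq_integral_norm]
    refine integral_congr_ae ?_
    filter_upwards [Lp.coeFn_add f g] with x hx
    rw [hx]; rfl
  have hI2 : ∫ x, ‖f x - g x‖ ∂μ = ‖f - g‖ := by
    rw [L1.norm_eq_integral_norm]
    refine integral_congr_ae ?_
    filter_upwards [Lp.coeFn_sub f g] with x hx
    rw [hx]; rfl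
  have hiA : Integrable (fun x => 2 * (‖f x‖ + ‖g x‖)) μ := (hf.norm.add hg.norm).const_mul 2
  have hiB : Integrable (fun x => ‖f x + g x‖ + ‖f x - g x‖) μ := by
    have h1 : Integrable (fun x => ‖f x + g x‖) μ := (hf.add hg).norm
    have h2 : Integrable (fun x => ‖f x - g x‖) μ := (hf.sub hg).norm
    exact h1.add h2
  have h1' : Integrable (fun x => ‖f x + g x‖) μ := (hf.add hg).norm
  have h2' : Integrable (fun x => ‖f x - g x‖) μ := (hf.sub hg).norm
  have hA : ∫ x, 2 * (‖f x‖ + ‖g x‖) ∂μ = 2 * ‖f‖ + 2 * ‖g‖ := by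
    rw [MeasureTheory.integral_const_mul, integral_add hf.norm hg.norm,
      ← L1.norm_eq_integral_norm f, ← L1.norm_eq_integral_norm g]
    ring
  have hB : ∫ x, (‖f x + g x‖ + ‖f x - g x‖) ∂μ = ‖f + g‖ + ‖f - g‖ := by
    rw [integral_add h1' h2', hI1, hI2]
  have hIφ : ∫ x, φ x ∂μ = 0 := by
    rw [hφ]
    rw [integral_sub hiA hiB, hA, hB]
    linarith
  have hae : φ =ᵐ[μ] 0 := (integral_eq_zero_iff_of_nonneg_ae hφ0 hint).mp hIφ
  have hor : ∀ᵐ x ∂μ, f x = 0 ∨ g x = 0 := by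
    filter_upwards [hae] with x hx
    simp only [hφ, Pi.zero_apply] at hx
    apply real_key
    simp only [Real.norm_eq_abs] at hx
    linarith
  rw [show {x | f x ≠ 0 ∧ g x ≠ 0} = {x | ¬(f x = 0 ∨ g x = 0)} by ext x; push_neg; rfl]
  exact hor

/-- every linear isometry `ψ : L^1(ν) → L^1(υ)` preserves essential
disjointness of supports. -/
theorem stmt3 {Ω₁ Ω₂ : Type*} [MeasurableSpace Ω₁] [MeasurableSpace Ω₂]
    (ν : Measure Ω₁) (υ : Measure Ω₂)
    (ψ : Lp ℝ 1 ν →ₗᵢ[ℝ] Lp ℝ 1 υ) (f g : Lp ℝ 1 ν)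
    (hfg : ν {x | f x ≠ 0 ∧ g x ≠ 0} = 0) :
    υ {y | (ψ f) y ≠ 0 ∧ (ψ g) y ≠ 0} = 0 := by
  apply disjoint_of_norm
  have h1 : ψ f + ψ g = ψ (f + g) := (map_add ψ f g).symm
  have h2 : ψ f - ψ g = ψ (f - g) := (map_sub ψ f g).symm
  rw [h1, h2, ψ.norm_map, ψ.norm_map, ψ.norm_map, ψ.norm_map]
  exact norm_add_sub_of_disjoint f g hfg
end

section
/- Let (Ω, Σ, μ) be a positive measure space and consider real L^∞(μ). If T, S are surjective linear isometries of L^∞(μ) and A ∈ Σ is such that T(χ_A) ≠ S(χ_A) in L^∞(μ), then ‖T χ_A − S χ_A‖_∞ ≥ 1. -/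
open MeasureTheory ENNReal

section Aux

variable {Ω : Type*} [MeasurableSpace Ω] {μ : Measure Ω}

lemma stmt12_ae_abs_le_norm (f : Lp ℝ ∞ μ) : ∀ᵐ x ∂μ, |(f : Ω → ℝ) x| ≤ ‖f‖ := by
  have h := ae_le_eLpNormEssSup (f := (f : Ω → ℝ)) (μ := μ)
  have hfin : eLpNorm (f : Ω → ℝ) ∞ μ ≠ ∞ := (Lp.memLp f).eLpNorm_lt_top.ne
  rw [eLpNorm_exponent_top] at hfin
  filter_upwards [h] with x hx
  have h2 : ((‖(f : Ω → ℝ) x‖₊ : ℝ≥0∞)).toReal ≤ (eLpNormEssSup (f : Ω → ℝ) μ).toReal :=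
    ENNReal.toReal_mono hfin hx
  simpa [Lp.norm_def, eLpNorm_exponent_top, Real.norm_eq_abs] using h2

lemma stmt12_norm_le_of_ae (f : Lp ℝ ∞ μ) {C : ℝ} (hC : 0 ≤ C)
    (h : ∀ᵐ x ∂μ, |(f : Ω → ℝ) x| ≤ C) : ‖f‖ ≤ C := by
  rw [Lp.norm_def, eLpNorm_exponent_top]
  have h2 := eLpNormEssSup_le_of_ae_bound (f := (f : Ω → ℝ)) (μ := μ) (C := C)
    (by simpa [Real.norm_eq_abs] using h)
  exact ENNReal.toReal_le_of_le_ofReal hC h2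

/-- `f` is an "extreme-type" point of the unit ball. -/
def Stmt12P (f : Lp ℝ ∞ μ) : Prop :=
  ∀ g : Lp ℝ ∞ μ, ‖g‖ ≤ 1 → ‖(2:ℝ) • f - g‖ ≤ 1 → g = f

lemma stmt12_P_map (U : Lp ℝ ∞ μ ≃ₗᵢ[ℝ] Lp ℝ ∞ μ) {f : Lp ℝ ∞ μ} (hf : Stmt12P f) :
    Stmt12P (U f) := by
  intro g hg hg2
  have h1 : ‖U.symm g‖ ≤ 1 := by rw [U.symm.norm_map]; exact hg
  have h2 : ‖(2:ℝ) • f - U.symm g‖ ≤ 1 := by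
    have heq : (2:ℝ) • f - U.symm g = U.symm ((2:ℝ) • U f - g) := by
      rw [map_sub, _root_.map_smul, U.symm_apply_apply]
    rw [heq, U.symm.norm_map]; exact hg2
  have h3 := hf _ h1 h2
  calc g = U (U.symm g) := (U.apply_symm_apply g).symm
  _ = U f := by rw [h3]

lemma stmt12_P_of_ae (f : Lp ℝ ∞ μ) (hf : ∀ᵐ x ∂μ, |(f : Ω → ℝ) x| = 1) : Stmt12P f := by
  intro g hg1 hg2
  have hgb : ∀ᵐ x ∂μ, |(g : Ω → ℝ) x| ≤ 1 :=
    (stmt12_ae_abs_le_norm g).mono fun x hx => hx.trans hg1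
  have h2b : ∀ᵐ x ∂μ, |((((2:ℝ) • f - g : Lp ℝ ∞ μ)) : Ω → ℝ) x| ≤ 1 :=
    (stmt12_ae_abs_le_norm _).mono fun x hx => hx.trans hg2
  refine (Lp.ext ?_).symm
  filter_upwards [hf, hgb, h2b, Lp.coeFn_sub ((2:ℝ) • f) g, Lp.coeFn_smul (2:ℝ) f]
    with x h1 h2 h3 h4 h5
  rw [h4, Pi.sub_apply, h5, Pi.smul_apply, smul_eq_mul] at h3
  rcases (abs_eq (by norm_num : (0:ℝ) ≤ 1)).mp h1 with hfx | hfx <;>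
    rw [hfx] at h3 ⊢ <;> rw [abs_le] at h2 h3 <;> linarith [h2.1, h2.2, h3.1, h3.2]

lemma stmt12_ae_of_P (f : Lp ℝ ∞ μ) (hf1 : ‖f‖ ≤ 1) (hf : Stmt12P f) :
    ∀ᵐ x ∂μ, |(f : Ω → ℝ) x| = 1 := by
  obtain ⟨f', hf'sm, hff'⟩ := Lp.aestronglyMeasurable f
  have hf'meas : Measurable f' := hf'sm.measurable
  set B : ℕ → Set Ω := fun n => {x | |f' x| ≤ 1 - 1 / (n + 1)} with hB
  have hBmeas : ∀ n, MeasurableSet (B n) := fun n =>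
    measurableSet_le (hf'meas.abs) measurable_const
  have hBnull : ∀ n, μ (B n) = 0 := by
    intro n
    by_contra hBn
    set ε : ℝ := 1 / (n + 1) with hε
    have hε0 : 0 < ε := by positivity
    set ind : Ω → ℝ := (B n).indicator (fun _ => ε) with hind
    have hindb : ∀ x, |ind x| ≤ ε := by
      intro x
      by_cases hx : x ∈ B n <;> simp [hind, hx, abs_of_nonneg hε0.le, hε0.le]
    have hmem : MemLp ind ∞ μ := by
      refine memLp_top_of_bound ((measurable_const.indicator (hBmeas n)).aestronglyMeasurable)
        ε (Filter.Eventually.of_forall fun x => ?_)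
      simpa [Real.norm_eq_abs] using hindb x
    set i : Lp ℝ ∞ μ := hmem.toLp ind with hi
    have hicoe : (i : Ω → ℝ) =ᵐ[μ] ind := MemLp.coeFn_toLp hmem
    have hfb : ∀ᵐ x ∂μ, |(f : Ω → ℝ) x| ≤ 1 :=
      (stmt12_ae_abs_le_norm f).mono fun x hx => hx.trans hf1
    set g : Lp ℝ ∞ μ := f + i with hg
    have hg1 : ‖g‖ ≤ 1 := by
      refine stmt12_norm_le_of_ae _ (by norm_num) ?_
      filter_upwards [Lp.coeFn_add f i, hicoe, hff', hfb] with x h1 h2 h3 h4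
      rw [h1, Pi.add_apply, h2]
      by_cases hx : x ∈ B n
      · have : |f' x| ≤ 1 - ε := hx
        rw [← h3] at this
        calc |(f : Ω → ℝ) x + ind x| ≤ |(f : Ω → ℝ) x| + |ind x| := abs_add_le _ _
        _ ≤ (1 - ε) + ε := add_le_add this (hindb x)
        _ = 1 := by ring
      · simp only [hind, Set.indicator_of_notMem hx, add_zero]
        exact h4
    have hg2 : ‖(2:ℝ) • f - g‖ ≤ 1 := by
      have heq : (2:ℝ) • f - g = f - i := by
        rw [hg, two_smul]; abel
      rw [heq]
      refine stmt12_norm_le_of_ae _ (by norm_num) ?_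
      filter_upwards [Lp.coeFn_sub f i, hicoe, hff', hfb] with x h1 h2 h3 h4
      rw [h1, Pi.sub_apply, h2]
      by_cases hx : x ∈ B n
      · have : |f' x| ≤ 1 - ε := hx
        rw [← h3] at this
        calc |(f : Ω → ℝ) x - ind x| ≤ |(f : Ω → ℝ) x| + |ind x| := abs_sub _ _
        _ ≤ (1 - ε) + ε := add_le_add this (hindb x)
        _ = 1 := by ring
      · simp only [hind, Set.indicator_of_notMem hx, sub_zero]
        exact h4
    have hgf : g = f := hf g hg1 hg2
    have hi0 : i = 0 := by
      have := hgf
      rw [hg] at this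
      exact add_left_cancel (by rw [this, add_zero])
    have hind0 : ind =ᵐ[μ] 0 := by
      have h0 : (i : Ω → ℝ) =ᵐ[μ] 0 := by rw [hi0]; exact Lp.coeFn_zero ℝ ∞ μ
      exact hicoe.symm.trans h0
    have : μ {x | ind x ≠ 0} = 0 := hind0
    have hsub : B n ⊆ {x | ind x ≠ 0} := by
      intro x hx
      simp only [Set.mem_setOf_eq, hind, Set.indicator_of_mem hx]
      exact hε0.ne'
    exact hBn (le_antisymm (this ▸ measure_mono hsub) zero_le)
  have hae : ∀ᵐ x ∂μ, ∀ n : ℕ, x ∉ B n := by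
    rw [ae_all_iff]
    intro n
    exact (measure_eq_zero_iff_ae_notMem.mp (hBnull n))
  have hfb : ∀ᵐ x ∂μ, |(f : Ω → ℝ) x| ≤ 1 :=
    (stmt12_ae_abs_le_norm f).mono fun x hx => hx.trans hf1
  filter_upwards [hae, hff', hfb] with x h1 h2 h3
  rw [h2]
  rw [h2] at h3
  by_contra hne
  have hlt : |f' x| < 1 := lt_of_le_of_ne h3 hne
  obtain ⟨n, hn⟩ := exists_nat_one_div_lt (by linarith : (0:ℝ) < 1 - |f' x|)
  exact h1 n (by simp only [hB, Set.mem_setOf_eq]; linarith)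

end Aux

/-- if `T, S` are surjective linear isometries of real `L^∞(μ)` and
`A` is measurable with `T(χ_A) ≠ S(χ_A)`, then `‖T χ_A − S χ_A‖_∞ ≥ 1`. -/
theorem stmt12 {Ω : Type*} [MeasurableSpace Ω] (μ : Measure Ω)
    (T S : Lp ℝ ∞ μ ≃ₗᵢ[ℝ] Lp ℝ ∞ μ)
    (A : Set Ω) (hA : MeasurableSet A) (χ : Lp ℝ ∞ μ)
    (hχ : (χ : Ω → ℝ) =ᵐ[μ] Set.indicator A fun _ => (1:ℝ))
    (hTS : T χ ≠ S χ) :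
    1 ≤ ‖T χ - S χ‖ := by
  by_contra hlt
  push_neg at hlt
  set one : Lp ℝ ∞ μ := (memLp_top_const (1:ℝ)).toLp _ with hone
  set e : Lp ℝ ∞ μ := (2:ℝ) • χ - one with he
  have hone_ae : (one : Ω → ℝ) =ᵐ[μ] fun _ => (1:ℝ) := MemLp.coeFn_toLp _
  have he_ae : ∀ᵐ x ∂μ, |(e : Ω → ℝ) x| = 1 := by
    filter_upwards [Lp.coeFn_sub ((2:ℝ) • χ) one, Lp.coeFn_smul (2:ℝ) χ, hone_ae, hχ]
      with x h1 h2 h3 h4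
    rw [he]
    rw [h1, Pi.sub_apply, h2, Pi.smul_apply, smul_eq_mul, h3, h4]
    by_cases hx : x ∈ A <;> simp [hx] <;> norm_num
  have hone1 : ∀ᵐ x ∂μ, |(one : Ω → ℝ) x| = 1 := by
    filter_upwards [hone_ae] with x hx; rw [hx]; norm_num
  have hne : ‖e‖ ≤ 1 := stmt12_norm_le_of_ae _ (by norm_num)
    (he_ae.mono fun x hx => hx.le)
  have hnone : ‖one‖ ≤ 1 := stmt12_norm_le_of_ae _ (by norm_num)
    (hone1.mono fun x hx => hx.le)
  have hTe : ∀ᵐ x ∂μ, |((T e : Lp ℝ ∞ μ) : Ω → ℝ) x| = 1 :=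
    stmt12_ae_of_P _ (by rw [T.norm_map]; exact hne) (stmt12_P_map T (stmt12_P_of_ae _ he_ae))
  have hTone : ∀ᵐ x ∂μ, |((T one : Lp ℝ ∞ μ) : Ω → ℝ) x| = 1 :=
    stmt12_ae_of_P _ (by rw [T.norm_map]; exact hnone) (stmt12_P_map T (stmt12_P_of_ae _ hone1))
  have hSe : ∀ᵐ x ∂μ, |((S e : Lp ℝ ∞ μ) : Ω → ℝ) x| = 1 :=
    stmt12_ae_of_P _ (by rw [S.norm_map]; exact hne) (stmt12_P_map S (stmt12_P_of_ae _ he_ae))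
  have hSone : ∀ᵐ x ∂μ, |((S one : Lp ℝ ∞ μ) : Ω → ℝ) x| = 1 :=
    stmt12_ae_of_P _ (by rw [S.norm_map]; exact hnone) (stmt12_P_map S (stmt12_P_of_ae _ hone1))
  have hχ_eq : χ = (2:ℝ)⁻¹ • (e + one) := by
    rw [he, sub_add_cancel, smul_smul]
    norm_num
  have hT : T χ = (2:ℝ)⁻¹ • (T e + T one) := by
    rw [hχ_eq, _root_.map_smul, map_add]
  have hS : S χ = (2:ℝ)⁻¹ • (S e + S one) := by
    rw [hχ_eq, _root_.map_smul, map_add]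
  have hd := stmt12_ae_abs_le_norm (T χ - S χ)
  have key : ((T χ - S χ : Lp ℝ ∞ μ) : Ω → ℝ) =ᵐ[μ] 0 := by
    have hTc : ((T χ : Lp ℝ ∞ μ) : Ω → ℝ) =ᵐ[μ]
        fun x => (2:ℝ)⁻¹ * (((T e : Lp ℝ ∞ μ) : Ω → ℝ) x + ((T one : Lp ℝ ∞ μ) : Ω → ℝ) x) := by
      rw [hT]
      filter_upwards [Lp.coeFn_smul (2:ℝ)⁻¹ (T e + T one), Lp.coeFn_add (T e) (T one)]
        with x h1 h2
      rw [h1, Pi.smul_apply, h2, Pi.add_apply, smul_eq_mul]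
    have hSc : ((S χ : Lp ℝ ∞ μ) : Ω → ℝ) =ᵐ[μ]
        fun x => (2:ℝ)⁻¹ * (((S e : Lp ℝ ∞ μ) : Ω → ℝ) x + ((S one : Lp ℝ ∞ μ) : Ω → ℝ) x) := by
      rw [hS]
      filter_upwards [Lp.coeFn_smul (2:ℝ)⁻¹ (S e + S one), Lp.coeFn_add (S e) (S one)]
        with x h1 h2
      rw [h1, Pi.smul_apply, h2, Pi.add_apply, smul_eq_mul]
    filter_upwards [hd, hTe, hTone, hSe, hSone, hTc, hSc, Lp.coeFn_sub (T χ) (S χ)]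
      with x h1 h2 h3 h4 h5 h6 h7 h8
    rw [h8, Pi.sub_apply] at h1 ⊢
    rw [h6, h7] at h1 ⊢
    have hlt' : |(2:ℝ)⁻¹ * (((T e : Lp ℝ ∞ μ) : Ω → ℝ) x + ((T one : Lp ℝ ∞ μ) : Ω → ℝ) x) -
        (2:ℝ)⁻¹ * (((S e : Lp ℝ ∞ μ) : Ω → ℝ) x + ((S one : Lp ℝ ∞ μ) : Ω → ℝ) x)| < 1 :=
      lt_of_le_of_lt h1 hlt
    simp only [Pi.zero_apply]
    rcases (abs_eq (by norm_num : (0:ℝ) ≤ 1)).mp h2 with ha | ha <;>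
    rcases (abs_eq (by norm_num : (0:ℝ) ≤ 1)).mp h3 with hb | hb <;>
    rcases (abs_eq (by norm_num : (0:ℝ) ≤ 1)).mp h4 with hc | hc <;>
    rcases (abs_eq (by norm_num : (0:ℝ) ≤ 1)).mp h5 with hd' | hd' <;>
      rw [ha, hb, hc, hd'] at hlt' ⊢ <;> norm_num at hlt' <;> norm_num
  have : T χ - S χ = 0 := by
    refine Lp.ext ?_
    exact key.trans (Lp.coeFn_zero ℝ ∞ μ).symm
  exact hTS (sub_eq_zero.mp this)
end

section
/- Let (Ω, Σ, μ) be a positive measure space. The group of surjective linear isometries of real L^∞(μ), with the strong operator topology, is totally separated: for any two distinct isometries T ≠ S there exist disjoint SOT-open sets U, V covering the whole group with T ∈ U and S ∈ V. -/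
open MeasureTheory ENNReal

/-- The strong operator topology on the group of surjective linear isometries. -/
def sot (R E : Type*) [Semiring R] [SeminormedAddCommGroup E] [Module R E] :
    TopologicalSpace (E ≃ₗᵢ[R] E) :=
  TopologicalSpace.induced (fun T => (⇑T : E → E)) Pi.topologicalSpace

set_option linter.unusedSectionVars false

section Aux

variable {Ω : Type*} [MeasurableSpace Ω] {μ : Measure Ω}

/-- sign functions in L∞ -/
def IsSign (μ : Measure Ω) (u : Lp ℝ ∞ μ) : Prop := ∀ᵐ ω ∂μ, |u ω| = 1

lemma ae_norm_le_norm (f : Lp ℝ ∞ μ) : ∀ᵐ ω ∂μ, ‖f ω‖ ≤ ‖f‖ := by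
  have h1 : eLpNormEssSup (⇑f) μ = (‖f‖₊ : ℝ≥0∞) := by
    rw [← enorm_eq_nnnorm, Lp.enorm_def, eLpNorm_exponent_top]
  filter_upwards [ae_le_eLpNormEssSup (f := ⇑f) (μ := μ)] with ω hω
  rw [h1, enorm_le_coe] at hω
  exact_mod_cast hω

lemma norm_le_of_ae_le (f : Lp ℝ ∞ μ) {C : ℝ} (hC : 0 ≤ C) (h : ∀ᵐ ω ∂μ, ‖f ω‖ ≤ C) :
    ‖f‖ ≤ C := by
  have h2 : eLpNorm (⇑f) ∞ μ ≤ ENNReal.ofReal C := by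
    rw [eLpNorm_exponent_top]
    exact eLpNormEssSup_le_of_ae_bound h
  rw [Lp.norm_def]
  calc (eLpNorm (⇑f) ∞ μ).toReal ≤ (ENNReal.ofReal C).toReal :=
        ENNReal.toReal_mono ENNReal.ofReal_ne_top h2
    _ = C := ENNReal.toReal_ofReal hC

lemma IsSign.norm_le_one {u : Lp ℝ ∞ μ} (hu : IsSign μ u) : ‖u‖ ≤ 1 :=
  norm_le_of_ae_le u zero_le_one (hu.mono fun ω h => by rw [Real.norm_eq_abs, h])

/-- quantization: two sign functions are equal or at distance ≥ 2 -/
lemma sign_eq_of_dist_lt_two {u v : Lp ℝ ∞ μ} (hu : IsSign μ u) (hv : IsSign μ v)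
    (h : ‖u - v‖ < 2) : u = v := by
  apply Lp.ext (p := ∞)
  filter_upwards [hu, hv, ae_norm_le_norm (u - v), Lp.coeFn_sub u v] with ω h1 h2 h3 h4
  rw [h4] at h3
  simp only [Pi.sub_apply, Real.norm_eq_abs] at h3
  have h5 : |u ω - v ω| < 2 := lt_of_le_of_lt h3 h
  rcases (abs_eq (zero_le_one (α := ℝ))).mp h1 with hu1 | hu1 <;>
    rcases (abs_eq (zero_le_one (α := ℝ))).mp h2 with hv1 | hv1 <;>
      rw [hu1, hv1] at h5 ⊢ <;>
        first
          | rfl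
          | (exfalso; rw [abs_lt] at h5; obtain ⟨ha, hb⟩ := h5; linarith)

/-- abstract characterization of sign functions, preserved by linear isometries -/
def ExtLike (μ : Measure Ω) (u : Lp ℝ ∞ μ) : Prop :=
  ‖u‖ ≤ 1 ∧ ∀ v : Lp ℝ ∞ μ, ‖u + v‖ ≤ 1 → ‖u - v‖ ≤ 1 → v = 0

lemma IsSign.extLike {u : Lp ℝ ∞ μ} (hu : IsSign μ u) : ExtLike μ u := by
  refine ⟨hu.norm_le_one, fun v h1 h2 => ?_⟩
  have hz : ⇑(0 : Lp ℝ ∞ μ) =ᵐ[μ] 0 := Lp.coeFn_zero _ _ _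
  apply Lp.ext (p := ∞)
  filter_upwards [hu, ae_norm_le_norm (u + v), ae_norm_le_norm (u - v),
    Lp.coeFn_add u v, Lp.coeFn_sub u v, hz] with ω e1 e2 e3 e4 e5 e6
  rw [e4] at e2; rw [e5] at e3; rw [e6]
  simp only [Pi.add_apply, Pi.sub_apply, Real.norm_eq_abs] at e2 e3
  have b2 := abs_le.mp (e2.trans h1)
  have b3 := abs_le.mp (e3.trans h2)
  rcases (abs_eq (zero_le_one (α := ℝ))).mp e1 with h | h <;>
    · rw [h] at b2 b3
      simp only [Pi.zero_apply]
      obtain ⟨a1, a2⟩ := b2; obtain ⟨a3, a4⟩ := b3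
      linarith

lemma ExtLike.isSign {u : Lp ℝ ∞ μ} (hu : ExtLike μ u) : IsSign μ u := by
  set g0 : Ω → ℝ := (Lp.aestronglyMeasurable u).mk u with hg0def
  have hmeas : Measurable g0 := (Lp.aestronglyMeasurable u).measurable_mk
  have hae : ⇑u =ᵐ[μ] g0 := (Lp.aestronglyMeasurable u).ae_eq_mk
  have hle : ∀ᵐ ω ∂μ, |g0 ω| ≤ 1 := by
    filter_upwards [ae_norm_le_norm u, hae] with ω h1 h2
    rw [h2, Real.norm_eq_abs] at h1; exact h1.trans hu.1
  suffices hg : ∀ᵐ ω ∂μ, |g0 ω| = 1 by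
    filter_upwards [hg, hae] with ω h1 h2; rw [h2]; exact h1
  by_contra hbad
  rw [MeasureTheory.ae_iff] at hbad
  -- the set where |g0| < 1 has positive measure
  have hBne : μ {ω | |g0 ω| < 1} ≠ 0 := by
    intro hB0
    apply hbad
    rw [← MeasureTheory.ae_iff]
    have h1 : ∀ᵐ ω ∂μ, ¬ |g0 ω| < 1 := by
      rw [MeasureTheory.ae_iff]
      simp only [not_lt]
      have : {a | ¬1 ≤ |g0 a|} = {ω | |g0 ω| < 1} := by ext ω; simp [not_le]
      rw [this]; exact hB0
    filter_upwards [hle, h1] with ω e1 e2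
    exact le_antisymm e1 (not_lt.mp e2)
  -- decompose into countably many sets bounded away from 1
  have hBU : {ω | |g0 ω| < 1} = ⋃ n : ℕ, {ω | |g0 ω| ≤ 1 - 1 / (n + 1)} := by
    ext ω
    simp only [Set.mem_setOf_eq, Set.mem_iUnion]
    constructor
    · intro h
      obtain ⟨n, hn⟩ := exists_nat_one_div_lt (sub_pos.mpr h)
      exact ⟨n, by linarith⟩
    · rintro ⟨n, hn⟩
      have : (0:ℝ) < 1 / (n + 1) := by positivity
      linarith
  rw [hBU] at hBne
  obtain ⟨n, hAn⟩ : ∃ n : ℕ, μ {ω | |g0 ω| ≤ 1 - 1 / (n + 1)} ≠ 0 := by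
    by_contra hall
    push_neg at hall
    exact hBne (measure_iUnion_null hall)
  set ε : ℝ := 1 / (n + 1) with hεdef
  have hεpos : 0 < ε := by positivity
  set A : Set Ω := {ω | |g0 ω| ≤ 1 - ε} with hAdef
  have hA : MeasurableSet A := measurableSet_le hmeas.abs measurable_const
  set w : Ω → ℝ := A.indicator fun _ => ε with hwdef
  have hwmeas : AEStronglyMeasurable w μ :=
    ((measurable_const.indicator hA).stronglyMeasurable).aestronglyMeasurable
  have hwbd : ∀ ω, ‖w ω‖ ≤ ε := by
    intro ω
    rw [Real.norm_eq_abs, hwdef, Set.indicator_apply]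
    split <;> simp [abs_of_nonneg hεpos.le, hεpos.le]
  have hwmem : MemLp w ∞ μ :=
    memLp_top_of_bound hwmeas ε (Filter.Eventually.of_forall hwbd)
  set v : Lp ℝ ∞ μ := hwmem.toLp w with hvdef
  have hvfn : ⇑v =ᵐ[μ] w := MemLp.coeFn_toLp hwmem
  have h1 : ‖u + v‖ ≤ 1 := by
    apply norm_le_of_ae_le _ zero_le_one
    filter_upwards [Lp.coeFn_add u v, hae, hvfn, hle] with ω e1 e2 e3 e4
    rw [e1]
    simp only [Pi.add_apply, Real.norm_eq_abs]
    rw [e2, e3, hwdef, Set.indicator_apply]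
    split
    · next h =>
        have hh := abs_le.mp (show |g0 ω| ≤ 1 - ε from h)
        rw [abs_le]; exact ⟨by linarith [hh.1], by linarith [hh.2]⟩
    · simpa using e4
  have h2 : ‖u - v‖ ≤ 1 := by
    apply norm_le_of_ae_le _ zero_le_one
    filter_upwards [Lp.coeFn_sub u v, hae, hvfn, hle] with ω e1 e2 e3 e4
    rw [e1]
    simp only [Pi.sub_apply, Real.norm_eq_abs]
    rw [e2, e3, hwdef, Set.indicator_apply]
    split
    · next h =>
        have hh := abs_le.mp (show |g0 ω| ≤ 1 - ε from h)
        rw [abs_le]; exact ⟨by linarith [hh.1], by linarith [hh.2]⟩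
    · simpa using e4
  have hv0 := hu.2 v h1 h2
  -- but v is nonzero since μ A ≠ 0
  have : ⇑v =ᵐ[μ] 0 := by rw [hv0]; exact Lp.coeFn_zero _ _ _
  have hw0 : ∀ᵐ ω ∂μ, w ω = 0 := hvfn.symm.trans this
  rw [MeasureTheory.ae_iff] at hw0
  apply hAn
  refine measure_mono_null ?_ hw0
  intro ω hω
  simp only [Set.mem_setOf_eq] at hω ⊢
  rw [hwdef, Set.indicator_of_mem hω]
  exact ne_of_gt hεpos

lemma isSign_map (T : Lp ℝ ∞ μ ≃ₗᵢ[ℝ] Lp ℝ ∞ μ) {u : Lp ℝ ∞ μ} (hu : IsSign μ u) :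
    IsSign μ (T u) := by
  apply ExtLike.isSign
  obtain ⟨h1, h2⟩ := hu.extLike
  refine ⟨by rw [T.norm_map]; exact h1, fun v hv1 hv2 => ?_⟩
  have e1 : T u + v = T (u + T.symm v) := by
    rw [map_add, T.apply_symm_apply]
  have e2 : T u - v = T (u - T.symm v) := by
    rw [map_sub, T.apply_symm_apply]
  rw [e1, T.norm_map] at hv1
  rw [e2, T.norm_map] at hv2
  have := h2 _ hv1 hv2
  have : v = T (T.symm v) := (T.apply_symm_apply v).symm
  rw [this, h2 _ hv1 hv2, map_zero]

/-- binary expansion iteration -/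
noncomputable def dseq (g : Ω → ℝ) : ℕ → Ω → ℝ
  | 0 => g
  | n + 1 => fun ω => 2 * dseq g n ω - (if 0 ≤ dseq g n ω then 1 else -1)

noncomputable def dsgn (g : Ω → ℝ) (n : ℕ) (ω : Ω) : ℝ :=
  if 0 ≤ dseq g n ω then 1 else -1

lemma dseq_measurable {g : Ω → ℝ} (hg : Measurable g) (n : ℕ) : Measurable (dseq g n) := by
  induction n with
  | zero => exact hg
  | succ n ih =>
      show Measurable fun ω => 2 * dseq g n ω - (if 0 ≤ dseq g n ω then 1 else -1)
      exact ((measurable_const.mul ih).sub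
        (Measurable.ite (measurableSet_le measurable_const ih) measurable_const
          measurable_const))

lemma dsgn_measurable {g : Ω → ℝ} (hg : Measurable g) (n : ℕ) : Measurable (dsgn g n) :=
  Measurable.ite (measurableSet_le measurable_const (dseq_measurable hg n))
    measurable_const measurable_const

lemma abs_dsgn {g : Ω → ℝ} (n : ℕ) (ω : Ω) : |dsgn g n ω| = 1 := by
  unfold dsgn; split <;> simp

lemma abs_dseq_le {g : Ω → ℝ} (hg : ∀ ω, |g ω| ≤ 1) (n : ℕ) (ω : Ω) : |dseq g n ω| ≤ 1 := by
  induction n with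
  | zero => exact hg ω
  | succ n ih =>
      show |2 * dseq g n ω - (if 0 ≤ dseq g n ω then 1 else -1)| ≤ 1
      rcases abs_le.mp ih with ⟨ha, hb⟩
      split
      · next h => rw [abs_le]; constructor <;> linarith
      · next h => rw [abs_le]; push_neg at h; constructor <;> linarith

lemma dseq_telescope {g : Ω → ℝ} (N : ℕ) (ω : Ω) :
    g ω = (∑ k ∈ Finset.range N, (1 / 2 : ℝ) ^ (k + 1) * dsgn g k ω)
      + (1 / 2 : ℝ) ^ N * dseq g N ω := by
  induction N with
  | zero => simp [dseq]
  | succ N ih =>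
      rw [Finset.sum_range_succ]
      have : dseq g (N + 1) ω = 2 * dseq g N ω - dsgn g N ω := rfl
      rw [this]
      rw [ih]
      ring

lemma lp_coeFn_sum {ι : Type*} (s : Finset ι) (f : ι → Lp ℝ ∞ μ) :
    ⇑(∑ i ∈ s, f i) =ᵐ[μ] fun ω => ∑ i ∈ s, f i ω := by
  classical
  induction s using Finset.induction_on with
  | empty => simp only [Finset.sum_empty]; exact Lp.coeFn_zero ℝ ∞ μ
  | insert a s' hne ih =>
      rw [Finset.sum_insert hne]
      filter_upwards [Lp.coeFn_add (f a) (∑ i ∈ s', f i), ih] with ω e1 e2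
      rw [e1]
      simp only [Pi.add_apply, e2]
      rw [Finset.sum_insert hne]

lemma eq_of_agree_on_signs (T S : Lp ℝ ∞ μ ≃ₗᵢ[ℝ] Lp ℝ ∞ μ)
    (h : ∀ u : Lp ℝ ∞ μ, IsSign μ u → T u = S u) : T = S := by
  -- first: agreement on the unit ball
  have key : ∀ f : Lp ℝ ∞ μ, ‖f‖ ≤ 1 → T f = S f := by
    intro f hf
    set g0 : Ω → ℝ := (Lp.aestronglyMeasurable f).mk f with hg0def
    have hmeas0 : Measurable g0 := (Lp.aestronglyMeasurable f).measurable_mk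
    have hae0 : ⇑f =ᵐ[μ] g0 := (Lp.aestronglyMeasurable f).ae_eq_mk
    set g : Ω → ℝ := fun ω => max (-1) (min 1 (g0 ω)) with hgdef
    have hmeas : Measurable g := measurable_const.max (measurable_const.min hmeas0)
    have hgle : ∀ ω, |g ω| ≤ 1 := by
      intro ω
      rw [abs_le]
      constructor
      · exact le_max_left _ _
      · exact max_le (by norm_num) (min_le_left _ _)
    have hae : ⇑f =ᵐ[μ] g := by
      filter_upwards [hae0, ae_norm_le_norm f] with ω e1 e2
      rw [e1]
      have : |g0 ω| ≤ 1 := by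
        rw [← e1, ← Real.norm_eq_abs]; exact e2.trans hf
      rcases abs_le.mp this with ⟨ha, hb⟩
      rw [hgdef]
      simp only [min_eq_right hb, max_eq_right ha]
    -- the sign elements
    have hUmem : ∀ k : ℕ, MemLp (dsgn g k) ∞ μ := fun k =>
      memLp_top_of_bound ((dsgn_measurable hmeas k).stronglyMeasurable).aestronglyMeasurable 1
        (Filter.Eventually.of_forall fun ω => by rw [Real.norm_eq_abs, abs_dsgn])
    set U : ℕ → Lp ℝ ∞ μ := fun k => (hUmem k).toLp (dsgn g k) with hUdef
    have hUsign : ∀ k, IsSign μ (U k) := by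
      intro k
      filter_upwards [MemLp.coeFn_toLp (hUmem k)] with ω e1
      rw [e1, abs_dsgn]
    -- the partial sums
    have hclose : ∀ N : ℕ, ‖T f - S f‖ ≤ 2 * (1 / 2 : ℝ) ^ N := by
      intro N
      set s : Lp ℝ ∞ μ := ∑ k ∈ Finset.range N, ((1 / 2 : ℝ) ^ (k + 1)) • U k with hsdef
      have hsfn : ⇑s =ᵐ[μ] fun ω => ∑ k ∈ Finset.range N, (1 / 2 : ℝ) ^ (k + 1) * dsgn g k ω := by
        have h1 := lp_coeFn_sum (Finset.range N) (fun k => ((1 / 2 : ℝ) ^ (k + 1)) • U k)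
        have h2 : ∀ k ∈ Finset.range N,
            ⇑(((1 / 2 : ℝ) ^ (k + 1)) • U k) =ᵐ[μ]
              fun ω => (1 / 2 : ℝ) ^ (k + 1) * dsgn g k ω := by
          intro k _
          filter_upwards [Lp.coeFn_smul ((1 / 2 : ℝ) ^ (k + 1)) (U k),
            MemLp.coeFn_toLp (hUmem k)] with ω e1 e2
          rw [e1]
          simp only [Pi.smul_apply, smul_eq_mul]
          rw [e2]
        rw [hsdef]
        refine h1.trans ?_
        have h3 : ∀ᵐ ω ∂μ, ∀ k ∈ Finset.range N,
            (((1 / 2 : ℝ) ^ (k + 1)) • U k) ω = (1 / 2 : ℝ) ^ (k + 1) * dsgn g k ω :=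
          (MeasureTheory.ae_ball_iff (Finset.range N).countable_toSet).mpr h2
        filter_upwards [h3] with ω e3
        exact Finset.sum_congr rfl e3
      have hfs : ‖f - s‖ ≤ (1 / 2 : ℝ) ^ N := by
        apply norm_le_of_ae_le _ (by positivity)
        filter_upwards [Lp.coeFn_sub f s, hae, hsfn] with ω e1 e2 e3
        rw [e1]
        simp only [Pi.sub_apply, Real.norm_eq_abs]
        rw [e2, e3]
        have ht := dseq_telescope (g := g) N ω
        have : g ω - ∑ k ∈ Finset.range N, (1 / 2 : ℝ) ^ (k + 1) * dsgn g k ω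
            = (1 / 2 : ℝ) ^ N * dseq g N ω := by linarith
        rw [this, abs_mul, abs_pow]
        calc |1 / 2|  ^ N * |dseq g N ω| ≤ |1 / 2| ^ N * 1 :=
              mul_le_mul_of_nonneg_left (abs_dseq_le hgle N ω) (by positivity)
          _ = (1 / 2 : ℝ) ^ N := by rw [abs_of_pos (by norm_num : (0:ℝ) < 1/2), mul_one]
      have hTs : T s = S s := by
        rw [hsdef, map_sum, map_sum]
        refine Finset.sum_congr rfl fun k _ => ?_
        rw [LinearIsometryEquiv.map_smul, LinearIsometryEquiv.map_smul, h (U k) (hUsign k)]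
      have : T f - S f = T (f - s) - S (f - s) := by
        rw [map_sub, map_sub, hTs]; abel
      rw [this]
      calc ‖T (f - s) - S (f - s)‖ ≤ ‖T (f - s)‖ + ‖S (f - s)‖ := norm_sub_le _ _
        _ = ‖f - s‖ + ‖f - s‖ := by rw [T.norm_map, S.norm_map]
        _ ≤ (1 / 2 : ℝ) ^ N + (1 / 2 : ℝ) ^ N := add_le_add hfs hfs
        _ = 2 * (1 / 2 : ℝ) ^ N := by ring
    have htend : Filter.Tendsto (fun N : ℕ => 2 * (1 / 2 : ℝ) ^ N) Filter.atTop (nhds 0) := by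
      have := tendsto_pow_atTop_nhds_zero_of_lt_one (by norm_num : (0:ℝ) ≤ 1/2)
        (by norm_num : (1/2:ℝ) < 1)
      simpa using this.const_mul 2
    have : ‖T f - S f‖ ≤ 0 := ge_of_tendsto' htend hclose
    have : T f - S f = 0 := by
      rw [← norm_le_zero_iff]; exact this
    exact sub_eq_zero.mp this
  -- scale to the whole space
  refine LinearIsometryEquiv.ext fun f => ?_
  have hc : (0:ℝ) < ‖f‖ + 1 := by positivity
  set f' : Lp ℝ ∞ μ := (‖f‖ + 1)⁻¹ • f with hf'def
  have hf' : ‖f'‖ ≤ 1 := by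
    rw [hf'def, norm_smul]
    rw [norm_inv, Real.norm_eq_abs, abs_of_pos hc]
    rw [inv_mul_le_iff₀ hc]
    linarith
  have h1 : f = (‖f‖ + 1) • f' := by
    rw [hf'def, smul_smul, mul_inv_cancel₀ (ne_of_gt hc), one_smul]
  calc T f = T ((‖f‖ + 1) • f') := by rw [← h1]
    _ = (‖f‖ + 1) • T f' := T.map_smul _ _
    _ = (‖f‖ + 1) • S f' := by rw [key f' hf']
    _ = S ((‖f‖ + 1) • f') := (S.map_smul _ _).symm
    _ = S f := by rw [← h1]

end Aux

/-- the group of surjective linear isometries of real `L^∞(μ)` is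
totally separated in the strong operator topology: any two distinct isometries lie in
disjoint SOT-open sets whose union is the whole group. -/
theorem stmt13 {Ω : Type*} [MeasurableSpace Ω] (μ : Measure Ω)
    (T S : Lp ℝ ∞ μ ≃ₗᵢ[ℝ] Lp ℝ ∞ μ) (hTS : T ≠ S) :
    ∃ U V : Set (Lp ℝ ∞ μ ≃ₗᵢ[ℝ] Lp ℝ ∞ μ),
      @IsOpen _ (sot ℝ (Lp ℝ ∞ μ)) U ∧ @IsOpen _ (sot ℝ (Lp ℝ ∞ μ)) V ∧
      T ∈ U ∧ S ∈ V ∧ U ∩ V = ∅ ∧ U ∪ V = Set.univ := by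
  obtain ⟨u, husign, hune⟩ : ∃ u : Lp ℝ ∞ μ, IsSign μ u ∧ T u ≠ S u := by
    by_contra hall
    push_neg at hall
    exact hTS (eq_of_agree_on_signs T S fun u hu => hall u hu)
  letI τ : TopologicalSpace (Lp ℝ ∞ μ ≃ₗᵢ[ℝ] Lp ℝ ∞ μ) := sot ℝ (Lp ℝ ∞ μ)
  have hcont : Continuous fun g : Lp ℝ ∞ μ ≃ₗᵢ[ℝ] Lp ℝ ∞ μ => g u :=
    (continuous_apply u).comp (continuous_induced_dom
      (f := fun g : Lp ℝ ∞ μ ≃ₗᵢ[ℝ] Lp ℝ ∞ μ => (⇑g : Lp ℝ ∞ μ → Lp ℝ ∞ μ)))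
  refine ⟨{g | dist (g u) (T u) < 1}, {g | 1 < dist (g u) (T u)}, ?_, ?_, ?_, ?_, ?_, ?_⟩
  · exact hcont.isOpen_preimage _ Metric.isOpen_ball
  · have : IsOpen {x : Lp ℝ ∞ μ | 1 < dist x (T u)} := by
      have : {x : Lp ℝ ∞ μ | 1 < dist x (T u)} = (Metric.closedBall (T u) 1)ᶜ := by
        ext x; simp [Metric.mem_closedBall, not_le]
      rw [this]; exact Metric.isClosed_closedBall.isOpen_compl
    exact hcont.isOpen_preimage _ this
  · simp [dist_self]
  · simp only [Set.mem_setOf_eq]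
    rw [dist_eq_norm]
    by_contra hle
    push_neg at hle
    exact hune (sign_eq_of_dist_lt_two (isSign_map S husign) (isSign_map T husign)
      (lt_of_le_of_lt hle one_lt_two)).symm
  · ext g
    simp only [Set.mem_inter_iff, Set.mem_setOf_eq, Set.mem_empty_iff_false, iff_false,
      not_and, not_lt]
    intro h1
    exact h1.le
  · ext g
    simp only [Set.mem_union, Set.mem_setOf_eq, Set.mem_univ, iff_true]
    rcases lt_or_ge (dist (g u) (T u)) 2 with h | h
    · left
      have : g u = T u := sign_eq_of_dist_lt_two (isSign_map g husign) (isSign_map T husign)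
        (by rwa [← dist_eq_norm])
      rw [this, dist_self]; exact zero_lt_one
    · right; linarith
end

section
/- Let X, Y be Banach spaces, 1 ≤ p < ∞, and suppose Z = X ⊕ Y with ‖(x,y)‖^p = ‖x‖^p + ‖y‖^p. Then the projections P(x,y) = (x,0) and Q(x,y) = (0,y) are L^p-projections, and any two L^p-projections on a Banach space Z with p ≠ 2 commute. -/
open ENNReal

/-- `P` is an `L^q`-projection: a bounded linear projection with
`‖z‖^q = ‖Pz‖^q + ‖z - Pz‖^q` for all `z`. -/
def IsLpProjection (q : ℝ) {Z : Type*} [NormedAddCommGroup Z] [NormedSpace ℝ Z]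
    (P : Z →L[ℝ] Z) : Prop :=
  (∀ z, P (P z) = P z) ∧ ∀ z, ‖z‖ ^ q = ‖P z‖ ^ q + ‖z - P z‖ ^ q

set_option maxHeartbeats 1000000

open Set

private lemma norm_smul_rpow {Z : Type*} [NormedAddCommGroup Z] [NormedSpace ℝ Z]
    (t : ℝ) (v : Z) (q : ℝ) : ‖t • v‖ ^ q = |t| ^ q * ‖v‖ ^ q := by
  rw [norm_smul, Real.norm_eq_abs, Real.mul_rpow (abs_nonneg t) (norm_nonneg v)]

/-- tangent line bound for concave rpow -/
private lemma rpow_tangent {q x y : ℝ} (hq : 1 ≤ q) (hx : 0 ≤ x) (hy : 0 < y) :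
    x ^ (1/q) ≤ y ^ (1/q) + (1/q) * (y ^ (1/q) / y) * (x - y) := by
  have hq0 : 0 < q := lt_of_lt_of_le one_pos hq
  have hs : (-1 : ℝ) ≤ x / y - 1 := by
    have : 0 ≤ x / y := div_nonneg hx hy.le
    linarith
  have hb := rpow_one_add_le_one_add_mul_self hs (by positivity : (0:ℝ) ≤ 1/q)
    (by rw [div_le_one hq0]; exact hq)
  have hxy : x = y * (x / y) := by field_simp
  have h1 : (1 : ℝ) + (x / y - 1) = x / y := by ring
  rw [h1] at hb
  calc x ^ (1/q) = (y * (x/y)) ^ (1/q) := by rw [← hxy]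
    _ = y ^ (1/q) * (x/y) ^ (1/q) := Real.mul_rpow hy.le (div_nonneg hx hy.le)
    _ ≤ y ^ (1/q) * (1 + (1/q) * (x/y - 1)) := by
        apply mul_le_mul_of_nonneg_left _ (Real.rpow_nonneg hy.le _)
        exact hb
    _ = y ^ (1/q) + (1/q) * (y ^ (1/q) / y) * (x - y) := by field_simp

private lemma pm_upper {q ε : ℝ} (hq1 : 1 ≤ q) (hq2 : q ≤ 2) (hε : 0 ≤ ε) (hε1 : ε ≤ 1) :
    (1+ε)^q + (1-ε)^q ≤ 2 + q * ε ^ (2:ℝ) := by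
  have h1ε : (0:ℝ) ≤ 1 + ε := by linarith
  have h2ε : (0:ℝ) ≤ 1 - ε := by linarith
  have hr1 : (0:ℝ) ≤ q/2 := by linarith
  have hr2 : q/2 ≤ 1 := by linarith
  have hcc := Real.concaveOn_rpow hr1 hr2
  have hmem1 : (1+ε)^(2:ℝ) ∈ Ici (0:ℝ) := Real.rpow_nonneg h1ε _
  have hmem2 : (1-ε)^(2:ℝ) ∈ Ici (0:ℝ) := Real.rpow_nonneg h2ε _
  have hj := hcc.2 hmem1 hmem2 (by norm_num : (0:ℝ) ≤ 1/2) (by norm_num : (0:ℝ) ≤ 1/2)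
    (by norm_num)
  simp only [smul_eq_mul] at hj
  have e1 : ((1+ε)^(2:ℝ))^(q/2) = (1+ε)^q := by
    rw [← Real.rpow_mul h1ε]; congr 1; ring
  have e2 : ((1-ε)^(2:ℝ))^(q/2) = (1-ε)^q := by
    rw [← Real.rpow_mul h2ε]; congr 1; ring
  have e3 : 1/2 * ((1+ε)^(2:ℝ)) + 1/2 * ((1-ε)^(2:ℝ)) = 1 + ε^(2:ℝ) := by
    rw [Real.rpow_two, Real.rpow_two, Real.rpow_two]; ring
  rw [e1, e2, e3] at hj
  have hb : (1 + ε^(2:ℝ))^(q/2) ≤ 1 + (q/2) * ε^(2:ℝ) := by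
    refine rpow_one_add_le_one_add_mul_self ?_ hr1 hr2
    have := Real.rpow_nonneg hε (2:ℝ); linarith
  nlinarith [hj, hb]

private lemma pm_lower {q ε : ℝ} (hq1 : 2 ≤ q) (hε : 0 ≤ ε) (hε1 : ε ≤ 1) :
    2 + q * ε ^ (2:ℝ) ≤ (1+ε)^q + (1-ε)^q := by
  have h1ε : (0:ℝ) ≤ 1 + ε := by linarith
  have h2ε : (0:ℝ) ≤ 1 - ε := by linarith
  have hr1 : (1:ℝ) ≤ q/2 := by linarith
  have hcc := convexOn_rpow hr1
  have hmem1 : (1+ε)^(2:ℝ) ∈ Ici (0:ℝ) := Real.rpow_nonneg h1ε _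
  have hmem2 : (1-ε)^(2:ℝ) ∈ Ici (0:ℝ) := Real.rpow_nonneg h2ε _
  have hj := hcc.2 hmem1 hmem2 (by norm_num : (0:ℝ) ≤ 1/2) (by norm_num : (0:ℝ) ≤ 1/2)
    (by norm_num)
  simp only [smul_eq_mul] at hj
  have e1 : ((1+ε)^(2:ℝ))^(q/2) = (1+ε)^q := by
    rw [← Real.rpow_mul h1ε]; congr 1; ring
  have e2 : ((1-ε)^(2:ℝ))^(q/2) = (1-ε)^q := by
    rw [← Real.rpow_mul h2ε]; congr 1; ring
  have e3 : 1/2 * ((1+ε)^(2:ℝ)) + 1/2 * ((1-ε)^(2:ℝ)) = 1 + ε^(2:ℝ) := by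
    rw [Real.rpow_two, Real.rpow_two, Real.rpow_two]; ring
  rw [e1, e2, e3] at hj
  have hb : 1 + (q/2) * ε^(2:ℝ) ≤ (1 + ε^(2:ℝ))^(q/2) := by
    refine one_add_mul_self_le_rpow_one_add ?_ hr1
    have := Real.rpow_nonneg hε (2:ℝ); linarith
  nlinarith [hj, hb]

private lemma key_contra {Z : Type*} [NormedAddCommGroup Z] [NormedSpace ℝ Z]
    {q A B c : ℝ} (hq1 : 1 ≤ q) (hq2 : q ≠ 2) (hB0 : 0 ≤ B) (hcpos : 0 < c)
    (a₁ b₁ : Z)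
    (key : ∀ t : ℝ, ‖a₁ + t • b₁‖ ^ q = (A + c) + |t|^q * (B + c) - |1 - t|^q * c) :
    False := by
  have hq0 : (0:ℝ) < q := lt_of_lt_of_le one_pos hq1
  have hBc : 0 < B + c := by linarith
  have hext : ∀ v : Z, ‖v‖ = (‖v‖ ^ q) ^ (1/q) := fun v => by
    rw [one_div, Real.rpow_rpow_inv (norm_nonneg v) hq0.ne']
  have hA0 : 0 ≤ A := by
    have h0 := key 0
    rw [abs_zero, Real.zero_rpow hq0.ne'] at h0
    have h1 : |1 - (0:ℝ)| = 1 := by norm_num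
    rw [h1, Real.one_rpow] at h0
    nlinarith [Real.rpow_nonneg (norm_nonneg (a₁ + (0:ℝ) • b₁)) q, h0]
  rcases lt_or_gt_of_ne hq2 with hqlt | hqgt
  · -- case q < 2
    have hD : (0:ℝ) < (A + c) + (B + c) := by linarith
    set D : ℝ := (A + c) + (B + c) with hD_def
    set ε : ℝ := min (1/2) ((c / (2 * (B + c))) ^ (1/(2-q) : ℝ)) with hε_def
    have hεpos : 0 < ε := lt_min (by norm_num) (Real.rpow_pos_of_pos (by positivity) _)
    have hεhalf : ε ≤ 1/2 := min_le_left _ _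
    have hX1 : ‖a₁ + (1+ε) • b₁‖ ^ q = D + ((1+ε)^q - 1) * (B + c) - ε^q * c := by
      rw [key (1+ε), abs_of_nonneg (by linarith : (0:ℝ) ≤ 1+ε),
        (by rw [abs_of_nonpos (by linarith)]; ring : |1 - (1+ε)| = ε)]
      ring
    have hX2 : ‖a₁ + (1-ε) • b₁‖ ^ q = D + ((1-ε)^q - 1) * (B + c) - ε^q * c := by
      rw [key (1-ε), abs_of_nonneg (by linarith : (0:ℝ) ≤ 1-ε),
        (by rw [abs_of_nonneg (by linarith)]; ring : |1 - (1-ε)| = ε)]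
      ring
    have hX0 : ‖a₁ + (1:ℝ) • b₁‖ ^ q = D := by
      rw [key 1]
      simp [Real.one_rpow, Real.zero_rpow hq0.ne']
      exact hD_def.symm
    have hn0 : ‖a₁ + (1:ℝ) • b₁‖ = D ^ (1/q) := by rw [hext (a₁ + (1:ℝ) • b₁), hX0]
    have htri : 2 * (D ^ (1/q : ℝ)) ≤ ‖a₁ + (1+ε) • b₁‖ + ‖a₁ + (1-ε) • b₁‖ := by
      have hvec : (a₁ + (1+ε) • b₁) + (a₁ + (1-ε) • b₁) = (2:ℝ) • (a₁ + (1:ℝ) • b₁) := by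
        module
      calc 2 * (D ^ (1/q : ℝ)) = 2 * ‖a₁ + (1:ℝ) • b₁‖ := by rw [hn0]
        _ = ‖(2:ℝ) • (a₁ + (1:ℝ) • b₁)‖ := by rw [norm_smul]; simp
        _ = ‖(a₁ + (1+ε) • b₁) + (a₁ + (1-ε) • b₁)‖ := by rw [hvec]
        _ ≤ _ := norm_add_le _ _
    have ht1 := rpow_tangent (x := ‖a₁ + (1+ε) • b₁‖ ^ q) (y := D) hq1
      (Real.rpow_nonneg (norm_nonneg _) _) hD
    have ht2 := rpow_tangent (x := ‖a₁ + (1-ε) • b₁‖ ^ q) (y := D) hq1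
      (Real.rpow_nonneg (norm_nonneg _) _) hD
    rw [← hext] at ht1 ht2
    have hcoef : 0 < (1/q) * (D^(1/q : ℝ)/D) :=
      _root_.mul_pos (by positivity) (div_pos (Real.rpow_pos_of_pos hD _) hD)
    have h0 : 0 ≤ (1/q) * (D^(1/q : ℝ)/D) *
        ((‖a₁ + (1+ε) • b₁‖^q - D) + (‖a₁ + (1-ε) • b₁‖^q - D)) := by
      nlinarith [htri, ht1, ht2]
    have hsum : 0 ≤ (‖a₁ + (1+ε) • b₁‖^q - D) + (‖a₁ + (1-ε) • b₁‖^q - D) :=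
      nonneg_of_mul_nonneg_right (by linarith [h0]) hcoef
    rw [hX1, hX2] at hsum
    have hpm := pm_upper hq1 hqlt.le hεpos.le (by linarith : ε ≤ 1)
    have e2 : (0:ℝ) ≤ ε^(2:ℝ) := Real.rpow_nonneg hεpos.le _
    have h2wc : 2 * (ε^q * c) ≤ ((1+ε)^q + (1-ε)^q - 2) * (B+c) := by nlinarith [hsum]
    have hchain : ((1+ε)^q + (1-ε)^q - 2) * (B+c) ≤ (q * ε^(2:ℝ)) * (B+c) :=
      mul_le_mul_of_nonneg_right (by linarith [hpm]) hBc.le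
    have hchain2 : (q * ε^(2:ℝ)) * (B+c) ≤ 2 * (ε^(2:ℝ) * (B+c)) := by
      have h := mul_nonneg (mul_nonneg (by linarith : (0:ℝ) ≤ 2 - q) e2) hBc.le
      nlinarith [h]
    have hkey2 : c * ε^q ≤ (B+c) * ε^(2:ℝ) := by nlinarith [h2wc, hchain, hchain2]
    have hsplit : ε ^ (2:ℝ) = ε^q * ε^(2-q : ℝ) := by
      rw [← Real.rpow_add hεpos]; congr 1; ring
    have hεq : 0 < ε ^ q := Real.rpow_pos_of_pos hεpos q
    have hfin : c ≤ (B+c) * ε^(2-q : ℝ) := by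
      rw [hsplit] at hkey2
      refine le_of_mul_le_mul_right ?_ hεq
      nlinarith [hkey2]
    have hεb : ε ^ (2-q : ℝ) ≤ c / (2 * (B + c)) := by
      have h1 : ε ≤ (c / (2 * (B + c))) ^ (1/(2-q) : ℝ) := min_le_right _ _
      have h2q : (0:ℝ) < 2 - q := by linarith
      calc ε ^ (2-q:ℝ) ≤ ((c / (2 * (B + c))) ^ (1/(2-q) : ℝ)) ^ (2-q:ℝ) :=
            Real.rpow_le_rpow hεpos.le h1 h2q.le
        _ = c / (2 * (B + c)) := by
            rw [← Real.rpow_mul (by positivity), one_div, inv_mul_cancel₀ h2q.ne',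
              Real.rpow_one]
    have hhalf : c ≤ c / 2 := by
      calc c ≤ (B+c) * ε^(2-q:ℝ) := hfin
        _ ≤ (B+c) * (c / (2*(B+c))) := mul_le_mul_of_nonneg_left hεb hBc.le
        _ = c / 2 := by field_simp
    linarith
  · -- case q > 2
    by_cases hA : A = 0
    · -- degenerate: a₁ = 0, contradiction from t = 1, 2
      have h0 := key 0
      rw [abs_zero, Real.zero_rpow hq0.ne',
        (by norm_num : |1 - (0:ℝ)| = 1), Real.one_rpow, hA] at h0
      have ha10 : ‖a₁ + (0:ℝ) • b₁‖ ^ q = 0 := by rw [h0]; ring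
      have ha1 : a₁ = 0 := by
        have h2 : ‖a₁ + (0:ℝ) • b₁‖ = 0 := by
          by_contra hne
          have hpos := Real.rpow_pos_of_pos
            (lt_of_le_of_ne (norm_nonneg (a₁ + (0:ℝ) • b₁)) (Ne.symm hne)) q
          linarith [ha10, hpos]
        simpa using h2
      have h1 := key 1
      rw [ha1, hA] at h1
      rw [(by norm_num : |(1:ℝ)| = 1), Real.one_rpow,
        (by norm_num : |1 - (1:ℝ)| = 0), Real.zero_rpow hq0.ne'] at h1
      have h1' : ‖b₁‖ ^ q = B + 2 * c := by
        have e : (0:Z) + (1:ℝ) • b₁ = b₁ := by module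
        rw [e] at h1; linarith
      have h2 := key 2
      rw [ha1] at h2
      rw [(by norm_num : |(2:ℝ)| = 2),
        (by norm_num : |1 - (2:ℝ)| = 1), Real.one_rpow, hA] at h2
      have e : (0:Z) + (2:ℝ) • b₁ = (2:ℝ) • b₁ := by module
      rw [e, norm_smul_rpow, (by norm_num : |(2:ℝ)| = 2), h1'] at h2
      have h2pos : (0:ℝ) < 2 ^ q := Real.rpow_pos_of_pos (by norm_num) q
      nlinarith [h2, h2pos, hcpos]
    · have hApos : 0 < A := lt_of_le_of_ne hA0 (Ne.symm hA)
      set ε : ℝ := min (1/2) ((q * c / (4 * (B + c))) ^ (1/(q-2) : ℝ)) with hε_def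
      have hεpos : 0 < ε := lt_min (by norm_num) (Real.rpow_pos_of_pos (by positivity) _)
      have hεhalf : ε ≤ 1/2 := min_le_left _ _
      have hX1 : ‖a₁ + ε • b₁‖ ^ q = A + ε^q * (B + c) - ((1-ε)^q - 1) * c := by
        rw [key ε, abs_of_nonneg hεpos.le,
          abs_of_nonneg (by linarith : (0:ℝ) ≤ 1 - ε)]
        ring
      have hX2 : ‖a₁ + (-ε) • b₁‖ ^ q = A + ε^q * (B + c) - ((1+ε)^q - 1) * c := by
        rw [key (-ε), abs_neg, abs_of_nonneg hεpos.le,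
          (by rw [abs_of_nonneg (by linarith)]; ring : |1 - (-ε)| = 1 + ε)]
        ring
      have hX0 : ‖a₁ + (0:ℝ) • b₁‖ ^ q = A := by
        rw [key 0, abs_zero, Real.zero_rpow hq0.ne',
          (by norm_num : |1 - (0:ℝ)| = 1), Real.one_rpow]
        ring
      have hn0 : ‖a₁ + (0:ℝ) • b₁‖ = A ^ (1/q) := by rw [hext (a₁ + (0:ℝ) • b₁), hX0]
      have htri : 2 * (A ^ (1/q : ℝ)) ≤ ‖a₁ + ε • b₁‖ + ‖a₁ + (-ε) • b₁‖ := by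
        have hvec : (a₁ + ε • b₁) + (a₁ + (-ε) • b₁) = (2:ℝ) • (a₁ + (0:ℝ) • b₁) := by
          module
        calc 2 * (A ^ (1/q : ℝ)) = 2 * ‖a₁ + (0:ℝ) • b₁‖ := by rw [hn0]
          _ = ‖(2:ℝ) • (a₁ + (0:ℝ) • b₁)‖ := by rw [norm_smul]; simp
          _ = ‖(a₁ + ε • b₁) + (a₁ + (-ε) • b₁)‖ := by rw [hvec]
          _ ≤ _ := norm_add_le _ _
      have ht1 := rpow_tangent (x := ‖a₁ + ε • b₁‖ ^ q) (y := A) hq1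
        (Real.rpow_nonneg (norm_nonneg _) _) hApos
      have ht2 := rpow_tangent (x := ‖a₁ + (-ε) • b₁‖ ^ q) (y := A) hq1
        (Real.rpow_nonneg (norm_nonneg _) _) hApos
      rw [← hext] at ht1 ht2
      have hcoef : 0 < (1/q) * (A^(1/q : ℝ)/A) :=
        _root_.mul_pos (by positivity) (div_pos (Real.rpow_pos_of_pos hApos _) hApos)
      have h0 : 0 ≤ (1/q) * (A^(1/q : ℝ)/A) *
          ((‖a₁ + ε • b₁‖^q - A) + (‖a₁ + (-ε) • b₁‖^q - A)) := by
        nlinarith [htri, ht1, ht2]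
      have hsum : 0 ≤ (‖a₁ + ε • b₁‖^q - A) + (‖a₁ + (-ε) • b₁‖^q - A) :=
        nonneg_of_mul_nonneg_right (by linarith [h0]) hcoef
      rw [hX1, hX2] at hsum
      have hpm := pm_lower hqgt.le hεpos.le (by linarith : ε ≤ 1)
      have e2 : (0:ℝ) ≤ ε^(2:ℝ) := Real.rpow_nonneg hεpos.le _
      -- hsum : 0 ≤ 2 ε^q (B+c) - ((1+ε)^q + (1-ε)^q - 2) c
      have h2wc : ((1+ε)^q + (1-ε)^q - 2) * c ≤ 2 * (ε^q * (B+c)) := by nlinarith [hsum]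
      have hchain : (q * ε^(2:ℝ)) * c ≤ ((1+ε)^q + (1-ε)^q - 2) * c :=
        mul_le_mul_of_nonneg_right (by linarith [hpm]) hcpos.le
      have hkey2 : (q * c) * ε^(2:ℝ) ≤ (2 * (B+c)) * ε^q := by nlinarith [h2wc, hchain]
      have hsplit : ε ^ q = ε^(2:ℝ) * ε^(q-2 : ℝ) := by
        rw [← Real.rpow_add hεpos]; congr 1; ring
      have hε2 : 0 < ε ^ (2:ℝ) := Real.rpow_pos_of_pos hεpos _
      have hfin : q * c ≤ (2 * (B+c)) * ε^(q-2 : ℝ) := by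
        rw [hsplit] at hkey2
        refine le_of_mul_le_mul_right ?_ hε2
        nlinarith [hkey2]
      have hεb : ε ^ (q-2 : ℝ) ≤ q * c / (4 * (B + c)) := by
        have h1 : ε ≤ (q * c / (4 * (B + c))) ^ (1/(q-2) : ℝ) := min_le_right _ _
        have h2q : (0:ℝ) < q - 2 := by linarith
        calc ε ^ (q-2:ℝ) ≤ ((q * c / (4 * (B + c))) ^ (1/(q-2) : ℝ)) ^ (q-2:ℝ) :=
              Real.rpow_le_rpow hεpos.le h1 h2q.le
          _ = q * c / (4 * (B + c)) := by
              rw [← Real.rpow_mul (by positivity), one_div, inv_mul_cancel₀ h2q.ne',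
                Real.rpow_one]
      have hhalf : q * c ≤ q * c / 2 := by
        calc q * c ≤ (2 * (B+c)) * ε^(q-2:ℝ) := hfin
          _ ≤ (2 * (B+c)) * (q * c / (4*(B+c))) :=
              mul_le_mul_of_nonneg_left hεb (by positivity)
          _ = q * c / 2 := by field_simp; ring
      nlinarith [hhalf, hcpos, hq0]

private lemma lp_invariant {q : ℝ} (hq1 : 1 ≤ q) (hq2 : q ≠ 2)
    {Z : Type*} [NormedAddCommGroup Z] [NormedSpace ℝ Z]
    {P Q : Z →L[ℝ] Z} (hP : IsLpProjection q P) (hQ : IsLpProjection q Q)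
    {x : Z} (hx : Q x = x) : Q (P x) = P x := by
  have hq0 : (0:ℝ) < q := lt_of_lt_of_le one_pos hq1
  by_cases hc : P x - Q (P x) = 0
  · rw [sub_eq_zero] at hc; exact hc.symm
  exfalso
  have hcpos : 0 < ‖P x - Q (P x)‖ ^ q :=
    Real.rpow_pos_of_pos (norm_pos_iff.mpr hc) q
  refine key_contra (A := ‖Q (P x)‖ ^ q) (B := ‖Q (x - P x)‖ ^ q)
    (c := ‖P x - Q (P x)‖ ^ q) hq1 hq2 (Real.rpow_nonneg (norm_nonneg _) _) hcpos
    (Q (P x)) (Q (x - P x)) ?_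
  intro t
  have hPb : P (x - P x) = 0 := by rw [map_sub, hP.1]; abel
  have hbQ : (x - P x) - Q (x - P x) = -(P x - Q (P x)) := by
    rw [map_sub, hx]; abel
  have hna : ‖P x‖ ^ q = ‖Q (P x)‖ ^ q + ‖P x - Q (P x)‖ ^ q := hQ.2 (P x)
  have hnb : ‖x - P x‖ ^ q = ‖Q (x - P x)‖ ^ q + ‖P x - Q (P x)‖ ^ q := by
    have h := hQ.2 (x - P x)
    rwa [hbQ, norm_neg] at h
  have hw1 : ‖P x + t • (x - P x)‖ ^ q
      = ‖P x‖ ^ q + |t|^q * ‖x - P x‖ ^ q := by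
    have h := hP.2 (P x + t • (x - P x))
    have e1 : P (P x + t • (x - P x)) = P x := by
      rw [map_add, ContinuousLinearMap.map_smul, hP.1 x, hPb, smul_zero, add_zero]
    rw [e1, (by abel : P x + t • (x - P x) - P x = t • (x - P x)), norm_smul_rpow] at h
    exact h
  have h := hQ.2 (P x + t • (x - P x))
  have e1 : Q (P x + t • (x - P x)) = Q (P x) + t • Q (x - P x) := by
    rw [map_add, ContinuousLinearMap.map_smul]
  have e2 : P x + t • (x - P x) - (Q (P x) + t • Q (x - P x))
      = (1 - t) • (P x - Q (P x)) := by
    have e3 : P x + t • (x - P x) - (Q (P x) + t • Q (x - P x))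
        = (P x - Q (P x)) + t • ((x - P x) - Q (x - P x)) := by module
    rw [e3, hbQ]; module
  rw [e1, e2, norm_smul_rpow, hw1, hna, hnb] at h
  linarith [h]

private lemma lp_compl {q : ℝ} {Z : Type*} [NormedAddCommGroup Z] [NormedSpace ℝ Z]
    {Q : Z →L[ℝ] Z} (hQ : IsLpProjection q Q) :
    IsLpProjection q (ContinuousLinearMap.id ℝ Z - Q) := by
  constructor
  · intro z
    simp only [ContinuousLinearMap.sub_apply, ContinuousLinearMap.id_apply, map_sub, hQ.1]
    abel
  · intro z
    have h := hQ.2 z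
    simp only [ContinuousLinearMap.sub_apply, ContinuousLinearMap.id_apply]
    rw [(by abel : z - (z - Q z) = Q z)]
    linarith

theorem lp_commute {q : ℝ} (hq1 : 1 ≤ q) (hq2 : q ≠ 2)
    {Z : Type*} [NormedAddCommGroup Z] [NormedSpace ℝ Z]
    (P Q : Z →L[ℝ] Z) (hP : IsLpProjection q P) (hQ : IsLpProjection q Q)
    (z : Z) : P (Q z) = Q (P z) := by
  have h1 : Q (P (Q z)) = P (Q z) := lp_invariant hq1 hq2 hP hQ (hQ.1 z)
  have hQ' := lp_compl hQ
  have h2' : (ContinuousLinearMap.id ℝ Z - Q) ((ContinuousLinearMap.id ℝ Z - Q) z)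
      = (ContinuousLinearMap.id ℝ Z - Q) z := hQ'.1 z
  have h2 := lp_invariant hq1 hq2 hP hQ' h2'
  simp only [ContinuousLinearMap.sub_apply, ContinuousLinearMap.id_apply, map_sub] at h2
  -- h2 : P z - Q (P z) - (P (Q z) - Q (P (Q z))) = P z - P (Q z)
  rw [h1] at h2
  have h4 : P z - Q (P z) = P z - P (Q z) := by
    have := h2
    abel_nf at this ⊢
    exact this
  exact (sub_right_inj.mp h4).symm

private lemma stmt14_part1 {X Y : Type*} [NormedAddCommGroup X] [NormedSpace ℝ X] [CompleteSpace X]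
    [NormedAddCommGroup Y] [NormedSpace ℝ Y] [CompleteSpace Y]
    (p : ℝ≥0∞) [Fact (1 ≤ p)] (hp : p ≠ ∞) :
    (∃ P Q : WithLp p (X × Y) →L[ℝ] WithLp p (X × Y),
      (∀ z, P z = (WithLp.equiv p (X × Y)).symm ((WithLp.equiv p (X × Y) z).1, 0)) ∧
      (∀ z, Q z = (WithLp.equiv p (X × Y)).symm (0, (WithLp.equiv p (X × Y) z).2)) ∧
      IsLpProjection p.toReal P ∧ IsLpProjection p.toReal Q) := by
  have hq1 : (1:ℝ) ≤ p.toReal := by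
    rw [← ENNReal.toReal_one]
    exact ENNReal.toReal_mono hp (Fact.out : (1:ℝ≥0∞) ≤ p)
  have hq0 : (0:ℝ) < p.toReal := lt_of_lt_of_le one_pos hq1
  set q := p.toReal with hq_def
  have norm_q : ∀ w : WithLp p (X × Y), ‖w‖ ^ q = ‖w.fst‖^q + ‖w.snd‖^q := by
    intro w
    rw [WithLp.prod_norm_eq_add hq0, ← Real.rpow_mul (by positivity),
      one_div, inv_mul_cancel₀ hq0.ne', Real.rpow_one]
  let e : WithLp p (X × Y) ≃L[ℝ] X × Y := WithLp.prodContinuousLinearEquiv p ℝ X Y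
  refine ⟨(e.symm : X × Y →L[ℝ] WithLp p (X × Y)).comp
      ((ContinuousLinearMap.inl ℝ X Y).comp
        ((ContinuousLinearMap.fst ℝ X Y).comp (e : WithLp p (X × Y) →L[ℝ] X × Y))),
    (e.symm : X × Y →L[ℝ] WithLp p (X × Y)).comp
      ((ContinuousLinearMap.inr ℝ X Y).comp
        ((ContinuousLinearMap.snd ℝ X Y).comp (e : WithLp p (X × Y) →L[ℝ] X × Y))), ?_, ?_, ?_, ?_⟩
  · intro z; rfl
  · intro z; rfl
  · constructor
    · intro z; rfl
    · intro z
      rw [norm_q, norm_q, norm_q]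
      have h1 : ((e.symm : X × Y →L[ℝ] WithLp p (X × Y)).comp
          ((ContinuousLinearMap.inl ℝ X Y).comp
            ((ContinuousLinearMap.fst ℝ X Y).comp (e : WithLp p (X × Y) →L[ℝ] X × Y))) z).fst
          = z.fst := rfl
      have h2 : ((e.symm : X × Y →L[ℝ] WithLp p (X × Y)).comp
          ((ContinuousLinearMap.inl ℝ X Y).comp
            ((ContinuousLinearMap.fst ℝ X Y).comp (e : WithLp p (X × Y) →L[ℝ] X × Y))) z).snd
          = 0 := rfl
      rw [h1, h2, WithLp.sub_fst, WithLp.sub_snd, h1, h2]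
      simp [Real.zero_rpow hq0.ne']
  · constructor
    · intro z; rfl
    · intro z
      rw [norm_q, norm_q, norm_q]
      have h1 : ((e.symm : X × Y →L[ℝ] WithLp p (X × Y)).comp
          ((ContinuousLinearMap.inr ℝ X Y).comp
            ((ContinuousLinearMap.snd ℝ X Y).comp (e : WithLp p (X × Y) →L[ℝ] X × Y))) z).snd
          = z.snd := rfl
      have h2 : ((e.symm : X × Y →L[ℝ] WithLp p (X × Y)).comp
          ((ContinuousLinearMap.inr ℝ X Y).comp
            ((ContinuousLinearMap.snd ℝ X Y).comp (e : WithLp p (X × Y) →L[ℝ] X × Y))) z).fst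
          = 0 := rfl
      rw [h1, h2, WithLp.sub_fst, WithLp.sub_snd, h1, h2]
      simp [Real.zero_rpow hq0.ne']
      ring


/-- on `Z = X ⊕_p Y` the coordinate projections are `L^p`-projections,
and for `p ≠ 2` any two `L^p`-projections on a Banach space commute. -/
theorem stmt14 {X Y : Type*} [NormedAddCommGroup X] [NormedSpace ℝ X] [CompleteSpace X]
    [NormedAddCommGroup Y] [NormedSpace ℝ Y] [CompleteSpace Y]
    (p : ℝ≥0∞) [Fact (1 ≤ p)] (hp : p ≠ ∞) :
    (∃ P Q : WithLp p (X × Y) →L[ℝ] WithLp p (X × Y),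
      (∀ z, P z = (WithLp.equiv p (X × Y)).symm ((WithLp.equiv p (X × Y) z).1, 0)) ∧
      (∀ z, Q z = (WithLp.equiv p (X × Y)).symm (0, (WithLp.equiv p (X × Y) z).2)) ∧
      IsLpProjection p.toReal P ∧ IsLpProjection p.toReal Q) ∧
    (p ≠ 2 → ∀ (Z : Type*) [NormedAddCommGroup Z] [NormedSpace ℝ Z] [CompleteSpace Z]
      (P Q : Z →L[ℝ] Z), IsLpProjection p.toReal P → IsLpProjection p.toReal Q →
        ∀ z, P (Q z) = Q (P z)) := by
  have hq1 : (1:ℝ) ≤ p.toReal := by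
    rw [← ENNReal.toReal_one]
    exact ENNReal.toReal_mono hp (Fact.out : (1:ℝ≥0∞) ≤ p)
  refine ⟨stmt14_part1 p hp, fun hp2 Z _ _ _ P Q hP hQ z => ?_⟩
  have hq2 : p.toReal ≠ 2 := by
    intro h
    apply hp2
    have h2 : ((2:ℝ≥0∞)).toReal = 2 := by simp
    exact (ENNReal.toReal_eq_toReal_iff' hp (by norm_num)).mp (by rw [h, h2])
  exact lp_commute hq1 hq2 P Q hP hQ z
end
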